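/- Let K ⊆ D be compact and z, z₀ ∈ K with μ(A⁰_z) = μ(A⁰_{z₀}) = 0. Suppose L ≥ 0 satisfies |Fᵢ(t,x₁) − Fᵢ(t,x₂)| ≤ L|x₁ − x₂| for i = 1,2, all t ∈ [0,T] and x₁, x₂ ∈ K, and let M = sup{|F2(t,x)| : (t,x) ∈ [0,T] × K}. Then |f(z) − f(z₀)| ≤ 2TL|z − z₀| + 2M·(μ(A⁺_{z₀} ∩ A⁻_z) + μ(A⁻_{z₀} ∩ A⁺_z)). -/

import Mathlib

open Set MeasureTheory

lemma measurable_realSign : Measurable Real.sign := by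
  unfold Real.sign
  exact Measurable.ite measurableSet_Iio measurable_const
    (Measurable.ite measurableSet_Ioi measurable_const measurable_const)

lemma norm_realSign_le (r : ℝ) : ‖Real.sign r‖ ≤ 1 := by
  rcases lt_trichotomy r 0 with hr | hr | hr
  · rw [Real.sign_of_neg hr]; simp
  · simp [hr]
  · rw [Real.sign_of_pos hr]; simp

/-- Quantitative continuity estimate for the averaged function
`f(z) = ∫₀ᵀ (F1(t,z) + sgn(h(t,z)) • F2(t,z)) dt`:
`|f(z) − f(z₀)| ≤ 2TL|z − z₀| + 2M (μ(A⁺_{z₀} ∩ A⁻_z) + μ(A⁻_{z₀} ∩ A⁺_z))`. -/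
theorem averaged_function_estimate {n : ℕ} (T : ℝ) (hT : 0 < T)
    (D : Set (EuclideanSpace ℝ (Fin n))) (hD : IsOpen D)
    (F1 F2 : ℝ → EuclideanSpace ℝ (Fin n) → EuclideanSpace ℝ (Fin n))
    (h : ℝ → EuclideanSpace ℝ (Fin n) → ℝ)
    (hF1c : ContinuousOn (fun p : ℝ × EuclideanSpace ℝ (Fin n) => F1 p.1 p.2) (univ ×ˢ D))
    (hF2c : ContinuousOn (fun p : ℝ × EuclideanSpace ℝ (Fin n) => F2 p.1 p.2) (univ ×ˢ D))
    (hhc : ContinuousOn (fun p : ℝ × EuclideanSpace ℝ (Fin n) => h p.1 p.2) (univ ×ˢ D))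
    (hF1per : ∀ t x, F1 (t + T) x = F1 t x)
    (hF2per : ∀ t x, F2 (t + T) x = F2 t x)
    (hhper : ∀ t x, h (t + T) x = h t x)
    (K : Set (EuclideanSpace ℝ (Fin n))) (hK : IsCompact K) (hKD : K ⊆ D)
    (z z₀ : EuclideanSpace ℝ (Fin n)) (hz : z ∈ K) (hz₀ : z₀ ∈ K)
    (hA0z : volume {t ∈ Icc (0 : ℝ) T | h t z = 0} = 0)
    (hA0z₀ : volume {t ∈ Icc (0 : ℝ) T | h t z₀ = 0} = 0)
    (L : ℝ) (hL : 0 ≤ L)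
    (hlipF1 : ∀ t ∈ Icc (0 : ℝ) T, ∀ x₁ ∈ K, ∀ x₂ ∈ K, ‖F1 t x₁ - F1 t x₂‖ ≤ L * ‖x₁ - x₂‖)
    (hlipF2 : ∀ t ∈ Icc (0 : ℝ) T, ∀ x₁ ∈ K, ∀ x₂ ∈ K, ‖F2 t x₁ - F2 t x₂‖ ≤ L * ‖x₁ - x₂‖)
    (M : ℝ)
    (hM : IsLUB {r : ℝ | ∃ t ∈ Icc (0 : ℝ) T, ∃ x ∈ K, r = ‖F2 t x‖} M) :
    ‖(∫ t in (0 : ℝ)..T, (F1 t z + Real.sign (h t z) • F2 t z)) -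
        ∫ t in (0 : ℝ)..T, (F1 t z₀ + Real.sign (h t z₀) • F2 t z₀)‖
      ≤ 2 * T * L * ‖z - z₀‖ +
        2 * M * ((volume ({t ∈ Icc (0 : ℝ) T | 0 < h t z₀} ∩ {t ∈ Icc (0 : ℝ) T | h t z < 0})).toReal +
          (volume ({t ∈ Icc (0 : ℝ) T | h t z₀ < 0} ∩ {t ∈ Icc (0 : ℝ) T | 0 < h t z})).toReal) := by
  have hzD : z ∈ D := hKD hz
  have hz₀D : z₀ ∈ D := hKD hz₀
  -- continuity in `t` at the two fixed points
  have hc1z : Continuous fun t => F1 t z :=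
    hF1c.comp_continuous (continuous_id.prodMk continuous_const) fun t => ⟨trivial, hzD⟩
  have hc1z₀ : Continuous fun t => F1 t z₀ :=
    hF1c.comp_continuous (continuous_id.prodMk continuous_const) fun t => ⟨trivial, hz₀D⟩
  have hc2z : Continuous fun t => F2 t z :=
    hF2c.comp_continuous (continuous_id.prodMk continuous_const) fun t => ⟨trivial, hzD⟩
  have hc2z₀ : Continuous fun t => F2 t z₀ :=
    hF2c.comp_continuous (continuous_id.prodMk continuous_const) fun t => ⟨trivial, hz₀D⟩
  have hchz : Continuous fun t => h t z :=
    hhc.comp_continuous (continuous_id.prodMk continuous_const) fun t => ⟨trivial, hzD⟩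
  have hchz₀ : Continuous fun t => h t z₀ :=
    hhc.comp_continuous (continuous_id.prodMk continuous_const) fun t => ⟨trivial, hz₀D⟩
  -- bound on F2
  have hM' : ∀ t ∈ Icc (0 : ℝ) T, ∀ x ∈ K, ‖F2 t x‖ ≤ M := fun t ht x hx =>
    hM.1 ⟨t, ht, x, hx, rfl⟩
  have hM0 : 0 ≤ M := le_trans (norm_nonneg _) (hM' 0 ⟨le_rfl, hT.le⟩ z hz)
  -- the two "sign switching" sets
  set S₁ : Set ℝ := {t ∈ Icc (0 : ℝ) T | 0 < h t z₀} ∩ {t ∈ Icc (0 : ℝ) T | h t z < 0} with hS₁def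
  set S₂ : Set ℝ := {t ∈ Icc (0 : ℝ) T | h t z₀ < 0} ∩ {t ∈ Icc (0 : ℝ) T | 0 < h t z} with hS₂def
  have hmS₁ : MeasurableSet S₁ :=
    (measurableSet_Icc.inter (measurableSet_lt measurable_const hchz₀.measurable)).inter
      (measurableSet_Icc.inter (measurableSet_lt hchz.measurable measurable_const))
  have hmS₂ : MeasurableSet S₂ :=
    (measurableSet_Icc.inter (measurableSet_lt hchz₀.measurable measurable_const)).inter
      (measurableSet_Icc.inter (measurableSet_lt measurable_const hchz.measurable))
  have hfinS₁ : volume S₁ < ⊤ :=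
    lt_of_le_of_lt (measure_mono fun t ht => ht.1.1) measure_Icc_lt_top
  have hfinS₂ : volume S₂ < ⊤ :=
    lt_of_le_of_lt (measure_mono fun t ht => ht.1.1) measure_Icc_lt_top
  -- integrability
  have hsgnz : Measurable fun t => Real.sign (h t z) := measurable_realSign.comp hchz.measurable
  have hsgnz₀ : Measurable fun t => Real.sign (h t z₀) :=
    measurable_realSign.comp hchz₀.measurable
  have hsmul_bound : ∀ (w : EuclideanSpace ℝ (Fin n)) (s : ℝ), ‖s • w‖ ≤ ‖s‖ * ‖w‖ := by
    intro w s; rw [norm_smul]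
  have hi2z : IntegrableOn (fun t => Real.sign (h t z) • F2 t z) (Ioc 0 T) := by
    refine Integrable.mono hc2z.integrableOn_Ioc
      ((hsgnz.smul hc2z.measurable).aestronglyMeasurable) ?_
    refine Filter.Eventually.of_forall fun t => ?_
    calc ‖Real.sign (h t z) • F2 t z‖ = ‖Real.sign (h t z)‖ * ‖F2 t z‖ := norm_smul _ _
      _ ≤ 1 * ‖F2 t z‖ := by
          exact mul_le_mul_of_nonneg_right (norm_realSign_le _) (norm_nonneg _)
      _ = ‖F2 t z‖ := one_mul _
  have hi2z₀ : IntegrableOn (fun t => Real.sign (h t z₀) • F2 t z₀) (Ioc 0 T) := by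
    refine Integrable.mono hc2z₀.integrableOn_Ioc
      ((hsgnz₀.smul hc2z₀.measurable).aestronglyMeasurable) ?_
    refine Filter.Eventually.of_forall fun t => ?_
    calc ‖Real.sign (h t z₀) • F2 t z₀‖ = ‖Real.sign (h t z₀)‖ * ‖F2 t z₀‖ := norm_smul _ _
      _ ≤ 1 * ‖F2 t z₀‖ := by
          exact mul_le_mul_of_nonneg_right (norm_realSign_le _) (norm_nonneg _)
      _ = ‖F2 t z₀‖ := one_mul _
  have hiφ : IntegrableOn (fun t => F1 t z + Real.sign (h t z) • F2 t z) (Ioc 0 T) :=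
    hc1z.integrableOn_Ioc.add hi2z
  have hiφ₀ : IntegrableOn (fun t => F1 t z₀ + Real.sign (h t z₀) • F2 t z₀) (Ioc 0 T) :=
    hc1z₀.integrableOn_Ioc.add hi2z₀
  -- the dominating function
  set g : ℝ → ℝ := fun t => 2 * L * ‖z - z₀‖ +
      2 * M * (S₁.indicator (fun _ => (1 : ℝ)) t + S₂.indicator (fun _ => (1 : ℝ)) t) with hgdef
  have hiI₁ : Integrable (S₁.indicator fun _ => (1 : ℝ)) (volume.restrict (Ioc 0 T)) :=
    (((integrable_indicator_iff hmS₁).mpr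
      ((integrableOn_const_iff).mpr (Or.inr hfinS₁)))).integrableOn
  have hiI₂ : Integrable (S₂.indicator fun _ => (1 : ℝ)) (volume.restrict (Ioc 0 T)) :=
    (((integrable_indicator_iff hmS₂).mpr
      ((integrableOn_const_iff).mpr (Or.inr hfinS₂)))).integrableOn
  have hig : Integrable g (volume.restrict (Ioc 0 T)) :=
    ((integrableOn_const_iff).mpr (Or.inr measure_Ioc_lt_top)).add ((hiI₁.add hiI₂).const_mul _)
  -- a.e. non-vanishing of h on the interval
  have hne_z : ∀ᵐ t ∂volume.restrict (Ioc (0:ℝ) T), t ∉ {t ∈ Icc (0 : ℝ) T | h t z = 0} := by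
    refine measure_eq_zero_iff_ae_notMem.mp (le_antisymm ?_ zero_le)
    exact le_trans (Measure.restrict_apply_le _ _) hA0z.le
  have hne_z₀ : ∀ᵐ t ∂volume.restrict (Ioc (0:ℝ) T), t ∉ {t ∈ Icc (0 : ℝ) T | h t z₀ = 0} := by
    refine measure_eq_zero_iff_ae_notMem.mp (le_antisymm ?_ zero_le)
    exact le_trans (Measure.restrict_apply_le _ _) hA0z₀.le
  rw [intervalIntegral.integral_of_le hT.le, intervalIntegral.integral_of_le hT.le,
    ← integral_sub hiφ hiφ₀]
  refine le_trans (norm_integral_le_of_norm_le hig ?_) ?_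
  · -- pointwise a.e. bound
    filter_upwards [ae_restrict_mem measurableSet_Ioc, hne_z, hne_z₀] with t htmem htz htz₀
    have htIcc : t ∈ Icc (0 : ℝ) T := Ioc_subset_Icc_self htmem
    have hz_ne : h t z ≠ 0 := fun e => htz ⟨htIcc, e⟩
    have hz₀_ne : h t z₀ ≠ 0 := fun e => htz₀ ⟨htIcc, e⟩
    have hF1b : ‖F1 t z - F1 t z₀‖ ≤ L * ‖z - z₀‖ := hlipF1 t htIcc z hz z₀ hz₀
    have hF2b : ‖F2 t z - F2 t z₀‖ ≤ L * ‖z - z₀‖ := hlipF2 t htIcc z hz z₀ hz₀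
    have hM2z : ‖F2 t z‖ ≤ M := hM' t htIcc z hz
    have hM2z₀ : ‖F2 t z₀‖ ≤ M := hM' t htIcc z₀ hz₀
    have hind₁ : 0 ≤ S₁.indicator (fun _ => (1 : ℝ)) t :=
      Set.indicator_nonneg (fun _ _ => zero_le_one) _
    have hind₂ : 0 ≤ S₂.indicator (fun _ => (1 : ℝ)) t :=
      Set.indicator_nonneg (fun _ _ => zero_le_one) _
    have hLa : 0 ≤ L * ‖z - z₀‖ := mul_nonneg hL (norm_nonneg _)
    rcases hz_ne.lt_or_gt with hneg | hpos <;> rcases hz₀_ne.lt_or_gt with h₀neg | h₀pos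
    · -- both negative
      rw [Real.sign_of_neg hneg, Real.sign_of_neg h₀neg]
      have key : (F1 t z + (-1 : ℝ) • F2 t z) - (F1 t z₀ + (-1 : ℝ) • F2 t z₀)
          = (F1 t z - F1 t z₀) - (F2 t z - F2 t z₀) := by module
      rw [key]
      have := (norm_sub_le (F1 t z - F1 t z₀) (F2 t z - F2 t z₀)).trans
        (add_le_add hF1b hF2b)
      have hMnn : 0 ≤ 2 * M * (S₁.indicator (fun _ => (1 : ℝ)) t
          + S₂.indicator (fun _ => (1 : ℝ)) t) := by positivity
      simp only [hgdef]
      linarith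
    · -- h t z < 0 < h t z₀ : t ∈ S₁
      have htS₁ : t ∈ S₁ := ⟨⟨htIcc, h₀pos⟩, ⟨htIcc, hneg⟩⟩
      have hi1 : S₁.indicator (fun _ => (1 : ℝ)) t = 1 := Set.indicator_of_mem htS₁ _
      rw [Real.sign_of_neg hneg, Real.sign_of_pos h₀pos]
      have key : (F1 t z + (-1 : ℝ) • F2 t z) - (F1 t z₀ + (1 : ℝ) • F2 t z₀)
          = (F1 t z - F1 t z₀) + (-(F2 t z) - F2 t z₀) := by module
      rw [key]
      have h2 : ‖-(F2 t z) - F2 t z₀‖ ≤ ‖F2 t z‖ + ‖F2 t z₀‖ := by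
        simpa using norm_sub_le (-(F2 t z)) (F2 t z₀)
      have := (norm_add_le (F1 t z - F1 t z₀) (-(F2 t z) - F2 t z₀)).trans
        (add_le_add hF1b (h2.trans (add_le_add hM2z hM2z₀)))
      have hMnn : 0 ≤ 2 * M * S₂.indicator (fun _ => (1 : ℝ)) t := by positivity
      simp only [hgdef, hi1]
      nlinarith
    · -- h t z₀ < 0 < h t z : t ∈ S₂
      have htS₂ : t ∈ S₂ := ⟨⟨htIcc, h₀neg⟩, ⟨htIcc, hpos⟩⟩
      have hi2 : S₂.indicator (fun _ => (1 : ℝ)) t = 1 := Set.indicator_of_mem htS₂ _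
      rw [Real.sign_of_pos hpos, Real.sign_of_neg h₀neg]
      have key : (F1 t z + (1 : ℝ) • F2 t z) - (F1 t z₀ + (-1 : ℝ) • F2 t z₀)
          = (F1 t z - F1 t z₀) + (F2 t z + F2 t z₀) := by module
      rw [key]
      have h2 : ‖F2 t z + F2 t z₀‖ ≤ ‖F2 t z‖ + ‖F2 t z₀‖ := norm_add_le _ _
      have := (norm_add_le (F1 t z - F1 t z₀) (F2 t z + F2 t z₀)).trans
        (add_le_add hF1b (h2.trans (add_le_add hM2z hM2z₀)))
      have hMnn : 0 ≤ 2 * M * S₁.indicator (fun _ => (1 : ℝ)) t := by positivity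
      simp only [hgdef, hi2]
      nlinarith
    · -- both positive
      rw [Real.sign_of_pos hpos, Real.sign_of_pos h₀pos]
      have key : (F1 t z + (1 : ℝ) • F2 t z) - (F1 t z₀ + (1 : ℝ) • F2 t z₀)
          = (F1 t z - F1 t z₀) + (F2 t z - F2 t z₀) := by module
      rw [key]
      have := (norm_add_le (F1 t z - F1 t z₀) (F2 t z - F2 t z₀)).trans
        (add_le_add hF1b hF2b)
      have hMnn : 0 ≤ 2 * M * (S₁.indicator (fun _ => (1 : ℝ)) t
          + S₂.indicator (fun _ => (1 : ℝ)) t) := by positivity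
      simp only [hgdef]
      linarith
  · -- compute and bound the integral of g
    have hind_int₁ : ∫ t in Ioc (0:ℝ) T, S₁.indicator (fun _ => (1 : ℝ)) t
        = (volume (S₁ ∩ Ioc 0 T)).toReal := by
      rw [setIntegral_indicator hmS₁, setIntegral_const, smul_eq_mul, mul_one, inter_comm, measureReal_def]
    have hind_int₂ : ∫ t in Ioc (0:ℝ) T, S₂.indicator (fun _ => (1 : ℝ)) t
        = (volume (S₂ ∩ Ioc 0 T)).toReal := by
      rw [setIntegral_indicator hmS₂, setIntegral_const, smul_eq_mul, mul_one, inter_comm, measureReal_def]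
    have hgint : ∫ t in Ioc (0:ℝ) T, g t
        = T * (2 * L * ‖z - z₀‖) +
          2 * M * ((volume (S₁ ∩ Ioc 0 T)).toReal + (volume (S₂ ∩ Ioc 0 T)).toReal) := by
      have hint2 : Integrable (fun t => 2 * M * (S₁.indicator (fun _ => (1 : ℝ)) t
          + S₂.indicator (fun _ => (1 : ℝ)) t)) (volume.restrict (Ioc 0 T)) :=
        (hiI₁.add hiI₂).const_mul _
      simp only [hgdef]
      rw [integral_add ((integrableOn_const_iff (C := 2 * L * ‖z - z₀‖)).mpr (Or.inr measure_Ioc_lt_top)) hint2]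
      rw [setIntegral_const, MeasureTheory.integral_const_mul, integral_add hiI₁ hiI₂,
        hind_int₁, hind_int₂, smul_eq_mul, measureReal_def, Real.volume_Ioc, sub_zero,
        ENNReal.toReal_ofReal hT.le]
    rw [hgint]
    have hμ₁ : (volume (S₁ ∩ Ioc 0 T)).toReal ≤ (volume S₁).toReal :=
      ENNReal.toReal_mono hfinS₁.ne (measure_mono inter_subset_left)
    have hμ₂ : (volume (S₂ ∩ Ioc 0 T)).toReal ≤ (volume S₂).toReal :=
      ENNReal.toReal_mono hfinS₂.ne (measure_mono inter_subset_left)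
    have h2M : (0:ℝ) ≤ 2 * M := by linarith
    have := mul_le_mul_of_nonneg_left (add_le_add hμ₁ hμ₂) h2M
    rw [hS₁def, hS₂def] at this
    linarith
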